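/- Biorthogonality of the dual basis: for any α = (i,j) ∈ 𝕀 and β = (k,l) ∈ 𝕀, the trace inner product satisfies ⟨w_α, v_β⟩ = 1 if α = β and ⟨w_α, v_β⟩ = 0 otherwise. -/

import Mathlib

open Matrix

/-- The index set 𝕀 = {(i,j) : 1 ≤ i < j ≤ n}, realized as ordered pairs of `Fin n`. -/
abbrev Idx (n : ℕ) := {p : Fin n × Fin n // p.1 < p.2}

/-- The basis matrix `w_{i,j} = e_{i,i} + e_{j,j} - e_{i,j} - e_{j,i}`. -/
noncomputable def w {n : ℕ} (α : Idx n) : Matrix (Fin n) (Fin n) ℝ :=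
  Matrix.single α.1.1 α.1.1 1 + Matrix.single α.1.2 α.1.2 1
    - Matrix.single α.1.1 α.1.2 1 - Matrix.single α.1.2 α.1.1 1

/-- The centering matrix `J = I - (1/n) 𝟙𝟙ᵀ`. -/
noncomputable def Jmat (n : ℕ) : Matrix (Fin n) (Fin n) ℝ :=
  1 - (n : ℝ)⁻¹ • Matrix.of (fun _ _ => (1 : ℝ))

/-- The `i`-th column of the centering matrix, i.e. `J eᵢ`. -/
noncomputable def Jcol (n : ℕ) (i : Fin n) : Fin n → ℝ := fun x => Jmat n x i

/-- The dual basis matrix `v_{i,j} = -(1/2)(a bᵀ + b aᵀ)` with `a = J eᵢ`, `b = J eⱼ`. -/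
noncomputable def v {n : ℕ} (α : Idx n) : Matrix (Fin n) (Fin n) ℝ :=
  (-(1 / 2) : ℝ) • (vecMulVec (Jcol n α.1.1) (Jcol n α.1.2)
    + vecMulVec (Jcol n α.1.2) (Jcol n α.1.1))

lemma trace_std (n : ℕ) (a b : Fin n) (M : Matrix (Fin n) (Fin n) ℝ) :
    ((Matrix.single a b (1:ℝ))ᵀ * M).trace = M a b := by
  simp [Matrix.trace, Matrix.diag, mul_apply, Matrix.single, ite_and]

lemma Jcol_apply (n : ℕ) (i x : Fin n) :
    Jcol n i x = (if x = i then 1 else 0) - (n : ℝ)⁻¹ := by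
  simp [Jcol, Jmat, Matrix.one_apply, Matrix.sub_apply, Matrix.smul_apply]

/-- Biorthogonality: `⟨w_α, v_β⟩ = δ_α^β`. -/
theorem stmt5 {n : ℕ} (hn : 2 ≤ n) (α β : Idx n) :
    ((w α)ᵀ * v β).trace = if α = β then 1 else 0 := by
  obtain ⟨⟨i, j⟩, hij⟩ := α
  obtain ⟨⟨k, l⟩, hkl⟩ := β
  have h1 : (i:ℕ) < (j:ℕ) := hij
  have h2 : (k:ℕ) < (l:ℕ) := hkl
  have hij' : i ≠ j := hij.ne
  have hkl' : k ≠ l := hkl.ne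
  have hw : ((w ⟨(i,j), hij⟩)ᵀ * v ⟨(k,l), hkl⟩).trace
      = (v ⟨(k,l), hkl⟩) i i + (v ⟨(k,l), hkl⟩) j j
        - (v ⟨(k,l), hkl⟩) i j - (v ⟨(k,l), hkl⟩) j i := by
    simp only [w, transpose_add, transpose_sub, add_mul, sub_mul,
      trace_add, trace_sub, trace_std]
  rw [hw]
  have hv : ∀ x y : Fin n, (v ⟨(k,l), hkl⟩ : Matrix (Fin n) (Fin n) ℝ) x y
      = (-(1/2) : ℝ) * (Jcol n k x * Jcol n l y + Jcol n l x * Jcol n k y) := by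
    intro x y
    simp [v, vecMulVec_apply, Matrix.smul_apply]
  simp only [hv, Jcol_apply]
  simp only [Subtype.mk.injEq, Prod.mk.injEq]
  rcases eq_or_ne i k with hik | hik <;> rcases eq_or_ne j l with hjl | hjl <;>
    rcases eq_or_ne i l with hil | hil <;> rcases eq_or_ne j k with hjk | hjk <;>
    first | (exfalso; omega) | (simp_all <;> ring_nf)
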